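/- Let M ≥ 1, and let B_1, …, B_M be mutually independent operator-valued random variables on Ω such that almost surely each B_j is self-adjoint with 0 ≼ B_j ≼ I, and E[B_j] = Σ for every j. Then for each k with 1 ≤ k ≤ M one has E[∏_{j=1}^k (I − B_j)] = (I − Σ)^k, and consequently the KGR operator Σ̂⁺ = I + ∑_{k=1}^M ∏_{j=1}^k (I − B_j) satisfies E[Σ̂⁺] = ∑_{k=0}^M (I − Σ)^k and E[Σ̂⁺]·Σ = I − (I − Σ)^{M+1}. -/

import Mathlib

open MeasureTheory ProbabilityTheory RealInnerProductSpace

/-- `Hl2` is the real Hilbert space `ℓ²` of square-summable real sequences. -/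
noncomputable abbrev Hl2 : Type := lp (fun _ : ℕ => ℝ) 2

/-- The KGR operator `Σ̂⁺ = I + ∑_{k=1}^M ∏_{j=1}^k (I - B j)`, where the
(non-commutative) product is taken left-to-right in increasing order of `j`
(indices shifted so that `B 0, …, B (M-1)` play the roles of `B_1, …, B_M`). -/
noncomputable def kgrOp (B : ℕ → Hl2 →L[ℝ] Hl2) (M : ℕ) : Hl2 →L[ℝ] Hl2 :=
  1 + ∑ k ∈ Finset.range M, ((List.range (k + 1)).map (fun j => 1 - B j)).prod

section NormBound

variable {E : Type*} [NormedAddCommGroup E] [InnerProductSpace ℝ E] [CompleteSpace E]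

lemma aux_norm_le_one (T : E →L[ℝ] E) (h0 : T.IsPositive) (h1 : (1 - T).IsPositive) :
    ‖T‖ ≤ 1 := by
  have hpos : ∀ z : E, 0 ≤ ⟪T z, z⟫ := by
    intro z
    simpa [ContinuousLinearMap.reApplyInnerSelf_apply] using h0.2 z
  have hle : ∀ z : E, ⟪T z, z⟫ ≤ ‖z‖ ^ 2 := by
    intro z
    have := h1.2 z
    simp only [ContinuousLinearMap.reApplyInnerSelf_apply, ContinuousLinearMap.sub_apply,
      ContinuousLinearMap.one_apply, inner_sub_left] at this
    have h2 : 0 ≤ ⟪z, z⟫ - ⟪T z, z⟫ := by simpa using this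
    nlinarith [real_inner_self_eq_norm_sq z]
  have hsym : ∀ u v : E, ⟪T u, v⟫ = ⟪T v, u⟫ := by
    intro u v
    have hs := (ContinuousLinearMap.isSelfAdjoint_iff_isSymmetric.mp h0.isSelfAdjoint) u v
    exact hs.trans (real_inner_comm _ _)
  refine T.opNorm_le_bound zero_le_one ?_
  intro x
  rw [one_mul]
  rcases eq_or_ne (T x) 0 with h | h
  · simp [h]
  have hTx : 0 < ‖T x‖ := norm_pos_iff.mpr h
  have hx : 0 < ‖x‖ := by
    rcases eq_or_ne x 0 with rfl | hx0
    · simp at h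
    · exact norm_pos_iff.mpr hx0
  set y : E := (‖x‖ / ‖T x‖) • T x with hy
  have hyn : ‖y‖ = ‖x‖ := by
    rw [hy, norm_smul, Real.norm_eq_abs, abs_of_nonneg (by positivity), div_mul_cancel₀]
    exact hTx.ne'
  have hinner : ⟪T x, y⟫ = ‖x‖ * ‖T x‖ := by
    rw [hy, real_inner_smul_right, real_inner_self_eq_norm_sq]
    field_simp
  have key : 4 * ⟪T x, y⟫ ≤ ‖x + y‖ ^ 2 := by
    have e : ⟪T (x + y), x + y⟫ - ⟪T (x - y), x - y⟫ = 4 * ⟪T x, y⟫ := by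
      simp only [map_add, map_sub, inner_add_left, inner_add_right, inner_sub_left,
        inner_sub_right, hsym y x]
      ring
    have h1' := hle (x + y)
    have h2' := hpos (x - y)
    linarith
  have hxy : ‖x + y‖ ^ 2 ≤ 4 * ‖x‖ ^ 2 := by
    have := norm_add_le x y
    rw [hyn] at this
    nlinarith [norm_nonneg (x + y)]
  rw [hinner] at key
  nlinarith

end NormBound

section IndepMul

lemma indep_mono {Ω : Type*} {mΩ : MeasurableSpace Ω} {μ : Measure Ω}
    {m1 m2 m1' m2' : MeasurableSpace Ω} (h : Indep m1 m2 μ) (h1 : m1' ≤ m1) (h2 : m2' ≤ m2) :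
    Indep m1' m2' μ := by
  rw [Indep_iff] at h ⊢
  exact fun t1 t2 ht1 ht2 => h t1 t2 (h1 _ ht1) (h2 _ ht2)

variable [MeasurableSpace (Hl2 →L[ℝ] Hl2)] [BorelSpace (Hl2 →L[ℝ] Hl2)]
  {Ω : Type*} [MeasureSpace Ω] [IsProbabilityMeasure (ℙ : Measure Ω)]

local notation "A" => Hl2 →L[ℝ] Hl2

lemma aux_id_aesm {X : Ω → Hl2 →L[ℝ] Hl2} (hX : AEStronglyMeasurable X ℙ) :
    AEStronglyMeasurable (id : A → A) (Measure.map X ℙ) := by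
  obtain ⟨t, ht, hmem⟩ := hX.isSeparable_ae_range
  refine aestronglyMeasurable_iff_aemeasurable_separable.mpr
    ⟨aemeasurable_id, closure t, ht.closure, ?_⟩
  have hme : closure t ∈ ae (Measure.map X ℙ) :=
    (mem_ae_map_iff hX.aemeasurable isClosed_closure.measurableSet).mpr
      (hmem.mono fun ω hω => subset_closure hω)
  filter_upwards [hme] with a ha using ha

set_option maxHeartbeats 1000000 in
set_option synthInstance.maxHeartbeats 400000 in
lemma aux_integral_mul (X Y : Ω → Hl2 →L[ℝ] Hl2) (hXY : IndepFun X Y ℙ)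
    (hX : AEStronglyMeasurable X ℙ) (hY : AEStronglyMeasurable Y ℙ)
    (hXb : ∀ᵐ ω ∂ℙ, ‖X ω‖ ≤ 1) (hYb : ∀ᵐ ω ∂ℙ, ‖Y ω‖ ≤ 1) :
    ∫ ω, X ω * Y ω ∂ℙ = (∫ ω, X ω ∂ℙ) * ∫ ω, Y ω ∂ℙ := by
  have hXm : AEMeasurable X ℙ := hX.aemeasurable
  have hYm : AEMeasurable Y ℙ := hY.aemeasurable
  have hpair : Measure.map (fun ω => (X ω, Y ω)) ℙ = (Measure.map X ℙ).prod (Measure.map Y ℙ) :=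
    (indepFun_iff_map_prod_eq_prod_map_map hXm hYm).mp hXY
  haveI : IsProbabilityMeasure (Measure.map X ℙ) := Measure.isProbabilityMeasure_map hXm
  haveI : IsProbabilityMeasure (Measure.map Y ℙ) := Measure.isProbabilityMeasure_map hYm
  have hidX := aux_id_aesm hX
  have hidY := aux_id_aesm hY
  have hnormset : MeasurableSet {a : A | ‖a‖ ≤ 1} :=
    (isClosed_le continuous_norm continuous_const).measurableSet
  have hbX : ∀ᵐ a ∂Measure.map X ℙ, ‖a‖ ≤ 1 := (ae_map_iff hXm hnormset).mpr hXb
  have hbY : ∀ᵐ a ∂Measure.map Y ℙ, ‖a‖ ≤ 1 := (ae_map_iff hYm hnormset).mpr hYb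
  have hfst : AEStronglyMeasurable (fun p : A × A => p.1) ((Measure.map X ℙ).prod (Measure.map Y ℙ)) := hidX.comp_fst
  have hsnd : AEStronglyMeasurable (fun p : A × A => p.2) ((Measure.map X ℙ).prod (Measure.map Y ℙ)) := hidY.comp_snd
  have hmul : AEStronglyMeasurable (fun p : A × A => p.1 * p.2) ((Measure.map X ℙ).prod (Measure.map Y ℙ)) :=
    hfst.mul hsnd
  have hb1 : ∀ᵐ p ∂(Measure.map X ℙ).prod (Measure.map Y ℙ), ‖p.1‖ ≤ 1 :=
    Measure.quasiMeasurePreserving_fst.ae hbX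
  have hb2 : ∀ᵐ p ∂(Measure.map X ℙ).prod (Measure.map Y ℙ), ‖p.2‖ ≤ 1 :=
    Measure.quasiMeasurePreserving_snd.ae hbY
  have hint : Integrable (fun p : A × A => p.1 * p.2) ((Measure.map X ℙ).prod (Measure.map Y ℙ)) := by
    refine ⟨hmul, HasFiniteIntegral.of_bounded (C := 1) ?_⟩
    filter_upwards [hb1, hb2] with p h1 h2
    exact (norm_mul_le _ _).trans (mul_le_one₀ h1 (norm_nonneg _) h2)
  have hidXi : Integrable (id : A → A) (Measure.map X ℙ) :=
    ⟨hidX, HasFiniteIntegral.of_bounded (C := 1) hbX⟩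
  have hidYi : Integrable (id : A → A) (Measure.map Y ℙ) :=
    ⟨hidY, HasFiniteIntegral.of_bounded (C := 1) hbY⟩
  calc ∫ ω, X ω * Y ω ∂ℙ
      = ∫ p, p.1 * p.2 ∂(Measure.map (fun ω => (X ω, Y ω)) ℙ) := by
        rw [integral_map (hXm.prodMk hYm) (by rw [hpair]; exact hmul)]
    _ = ∫ p, p.1 * p.2 ∂((Measure.map X ℙ).prod (Measure.map Y ℙ)) := by rw [hpair]
    _ = ∫ x, ∫ y, x * y ∂(Measure.map Y ℙ) ∂(Measure.map X ℙ) := integral_prod _ hint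
    _ = ∫ x, x * (∫ y, y ∂(Measure.map Y ℙ)) ∂(Measure.map X ℙ) := by
        congr 1
        funext x
        simpa using (ContinuousLinearMap.mul ℝ (Hl2 →L[ℝ] Hl2) x).integral_comp_comm hidYi
    _ = (∫ x, x ∂(Measure.map X ℙ)) * (∫ y, y ∂(Measure.map Y ℙ)) := by
        simpa using ((ContinuousLinearMap.mul ℝ (Hl2 →L[ℝ] Hl2)).flip (∫ y, y ∂(Measure.map Y ℙ))).integral_comp_comm
          hidXi
    _ = (∫ ω, X ω ∂ℙ) * ∫ ω, Y ω ∂ℙ := by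
        have h1 : ∫ (a : A), id a ∂Measure.map X ℙ = ∫ ω, id (X ω) ∂ℙ := integral_map hXm hidX
        have h2 : ∫ (a : A), id a ∂Measure.map Y ℙ = ∫ ω, id (Y ω) ∂ℙ := integral_map hYm hidY
        simp only [id_eq] at h1 h2
        rw [h1, h2]

end IndepMul

section Prod

lemma aux_list_prod_norm_le_one {A : Type*} [NormedRing A] [NormOneClass A]
    (l : List A) (h : ∀ a ∈ l, ‖a‖ ≤ 1) : ‖l.prod‖ ≤ 1 := by
  induction l with
  | nil => simp
  | cons a l ih =>
    rw [List.prod_cons]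
    exact (norm_mul_le _ _).trans
      (mul_le_one₀ (h a List.mem_cons_self) (norm_nonneg _)
        (ih fun b hb => h b (List.mem_cons_of_mem _ hb)))

lemma aux_sm_list_prod {α A : Type*} {m : MeasurableSpace α} [TopologicalSpace A] [Monoid A]
    [ContinuousMul A] (k : ℕ) (f : ℕ → α → A)
    (hf : ∀ j < k, StronglyMeasurable[m] (f j)) :
    StronglyMeasurable[m] (fun ω => ((List.range k).map fun j => f j ω).prod) := by
  induction k with
  | zero => simpa using stronglyMeasurable_const
  | succ n ih =>
    simp only [List.range_succ, List.map_append, List.prod_append, List.map_cons,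
      List.prod_cons, List.map_nil, List.prod_nil, mul_one]
    exact (ih fun j hj => hf j (hj.trans n.lt_succ_self)).mul (hf n n.lt_succ_self)

end Prod


set_option maxHeartbeats 1000000 in
set_option synthInstance.maxHeartbeats 200000 in
/-- **Expectation identity for the KGR operator.**
Let `B 0, …, B (M-1)` be mutually independent operator-valued random variables, each
almost surely self-adjoint with `0 ≼ B j ≼ I`, and with common mean `E[B j] = Cov`.
Then `E[∏_{j=1}^k (I - B j)] = (I - Cov) ^ k` for each `1 ≤ k ≤ M`, and consequently the
KGR operator `Σ̂⁺ = I + ∑_{k=1}^M ∏_{j=1}^k (I - B j)` satisfies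
`E[Σ̂⁺] = ∑_{k=0}^M (I - Cov) ^ k` and `E[Σ̂⁺] ∘ Cov = I - (I - Cov) ^ (M + 1)`. -/
theorem kgr_expectation_identity
    {Ω : Type} [MeasureSpace Ω] [IsProbabilityMeasure (ℙ : Measure Ω)]
    [MeasurableSpace (Hl2 →L[ℝ] Hl2)] [BorelSpace (Hl2 →L[ℝ] Hl2)]
    (M : ℕ) (hM : 1 ≤ M)
    (B : ℕ → Ω → Hl2 →L[ℝ] Hl2)
    (hBmeas : ∀ j < M, Measurable (B j))
    (hBsm : ∀ j < M, AEStronglyMeasurable (B j) ℙ)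
    (hBindep : iIndepFun (fun j : Fin M => B j) ℙ)
    (Cov : Hl2 →L[ℝ] Hl2)
    (hBpos : ∀ j < M, ∀ᵐ ω ∂ℙ, (B j ω).IsPositive ∧ (1 - B j ω).IsPositive)
    (hBmean : ∀ j < M, ∫ ω, B j ω ∂ℙ = Cov) :
    (∀ k : ℕ, 1 ≤ k → k ≤ M →
      ∫ ω, ((List.range k).map (fun j => 1 - B j ω)).prod ∂ℙ = (1 - Cov) ^ k) ∧
    (∫ ω, kgrOp (fun j => B j ω) M ∂ℙ = ∑ k ∈ Finset.range (M + 1), (1 - Cov) ^ k) ∧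
    ((∫ ω, kgrOp (fun j => B j ω) M ∂ℙ) ∘L Cov = 1 - (1 - Cov) ^ (M + 1)) := by
  classical
  haveI hnt : Nontrivial Hl2 := by
    refine ⟨(lp.single 2 (0 : ℕ) (1 : ℝ) : Hl2), 0, fun h => ?_⟩
    have h0 : (1 : ℝ) = 0 :=
      calc (1 : ℝ) = (lp.single 2 (0 : ℕ) (1 : ℝ) : Hl2) 0 :=
            (lp.single_apply_self (E := fun _ : ℕ => ℝ) 2 (0 : ℕ) (1 : ℝ)).symm
        _ = (0 : Hl2) 0 := by rw [h]
        _ = 0 := rfl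
    exact one_ne_zero h0
  haveI hnoc : NormOneClass (Hl2 →L[ℝ] Hl2) := ContinuousLinearMap.normOneClass
  haveI hna : NormedAlgebra ℝ (Hl2 →L[ℝ] Hl2) := inferInstance
  let B' : ℕ → Ω → Hl2 →L[ℝ] Hl2 := fun j => if h : j < M then (hBsm j h).mk (B j) else B j
  have hB'sm : ∀ j, j < M → StronglyMeasurable (B' j) := by
    intro j hj
    show StronglyMeasurable (if h : j < M then (hBsm j h).mk (B j) else B j)
    rw [dif_pos hj]
    exact (hBsm j hj).stronglyMeasurable_mk
  have hB'eq : ∀ j, j < M → B j =ᵐ[ℙ] B' j := by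
    intro j hj
    show B j =ᵐ[ℙ] (if h : j < M then (hBsm j h).mk (B j) else B j)
    rw [dif_pos hj]
    exact (hBsm j hj).ae_eq_mk
  have heq_all : ∀ᵐ ω ∂ℙ, ∀ j, j < M → B j ω = B' j ω := by
    rw [ae_all_iff]
    intro j
    by_cases h : j < M
    · exact (hB'eq j h).mono fun ω hω _ => hω
    · exact Filter.Eventually.of_forall fun ω hj => absurd hj h
  have hgood : ∀ᵐ ω ∂ℙ, ∀ j, j < M → (B' j ω).IsPositive ∧ (1 - B' j ω).IsPositive := by
    have hpos_all : ∀ᵐ ω ∂ℙ, ∀ j, j < M → (B j ω).IsPositive ∧ (1 - B j ω).IsPositive := by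
      rw [ae_all_iff]
      intro j
      by_cases h : j < M
      · exact (hBpos j h).mono fun ω hω _ => hω
      · exact Filter.Eventually.of_forall fun ω hj => absurd hj h
    filter_upwards [heq_all, hpos_all] with ω h1 h2 j hj
    rw [← h1 j hj]
    exact h2 j hj
  have hnorm : ∀ᵐ ω ∂ℙ, ∀ j, j < M → ‖1 - B' j ω‖ ≤ 1 ∧ ‖B' j ω‖ ≤ 1 := by
    filter_upwards [hgood] with ω h j hj
    obtain ⟨h1, h2⟩ := h j hj
    exact ⟨aux_norm_le_one _ h2 (by rwa [sub_sub_cancel]), aux_norm_le_one _ h1 h2⟩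
  -- properties of the partial products
  have hPsm : ∀ k, k ≤ M →
      StronglyMeasurable (fun ω => ((List.range k).map fun j => 1 - B' j ω).prod) := fun k hk =>
    aux_sm_list_prod k _ fun j hj => stronglyMeasurable_const.sub (hB'sm j (lt_of_lt_of_le hj hk))
  have hPb : ∀ k, k ≤ M →
      ∀ᵐ ω ∂ℙ, ‖((List.range k).map fun j => 1 - B' j ω).prod‖ ≤ 1 := by
    intro k hk
    filter_upwards [hnorm] with ω h
    refine aux_list_prod_norm_le_one _ ?_
    intro a ha
    simp only [List.mem_map, List.mem_range] at ha
    obtain ⟨j, hj, rfl⟩ := ha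
    exact (h j (lt_of_lt_of_le hj hk)).1
  have hPint : ∀ k, k ≤ M →
      Integrable (fun ω => ((List.range k).map fun j => 1 - B' j ω).prod) ℙ := fun k hk =>
    ⟨(hPsm k hk).aestronglyMeasurable, HasFiniteIntegral.of_bounded (hPb k hk)⟩
  -- independence of the partial product from the next factor
  have hIndep : ∀ k, k < M →
      IndepFun (fun ω => ((List.range k).map fun j => 1 - B' j ω).prod)
        (fun ω => 1 - B' k ω) ℙ := by
    intro k hk
    set S : Finset (Fin M) := Finset.univ.filter (fun i => (i : ℕ) < k) with hSdef
    set T : Finset (Fin M) := {⟨k, hk⟩} with hTdef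
    have hST : Disjoint S T := by
      rw [hTdef, Finset.disjoint_singleton_right, hSdef]
      simp
    have htuple := hBindep.indepFun_finset S T hST (fun i => hBmeas i i.isLt)
    have htuple' : IndepFun (fun ω (i : S) => B' (i : Fin M) ω)
        (fun ω (i : T) => B' (i : Fin M) ω) ℙ := by
      refine htuple.congr ?_ ?_ <;>
      · filter_upwards [heq_all] with ω h
        funext i
        exact h (i : Fin M) (i : Fin M).isLt
    have hind := (IndepFun_iff_Indep _ _ ℙ).mp htuple'
    have h1 : MeasurableSpace.comap (fun ω => ((List.range k).map fun j => 1 - B' j ω).prod)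
        inferInstance ≤
        MeasurableSpace.comap (fun ω (i : S) => B' (i : Fin M) ω) inferInstance := by
      rw [← measurable_iff_comap_le]
      have h0 : Measurable[MeasurableSpace.comap (fun ω (i : S) => B' (i : Fin M) ω)
          inferInstance] (fun ω (i : S) => B' (i : Fin M) ω) :=
        measurable_iff_comap_le.mpr le_rfl
      refine StronglyMeasurable.measurable (aux_sm_list_prod k _ ?_)
      intro j hj
      have hjM : j < M := lt_trans hj hk
      have hmem : (⟨j, hjM⟩ : Fin M) ∈ S := by simp [hSdef, hj]
      have hmeas : Measurable[MeasurableSpace.comap (fun ω (i : S) => B' (i : Fin M) ω)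
          inferInstance] (B' j) :=
        (measurable_pi_apply (⟨⟨j, hjM⟩, hmem⟩ : S)).comp h0
      refine StronglyMeasurable.sub stronglyMeasurable_const ?_
      exact stronglyMeasurable_iff_measurable_separable.mpr
        ⟨hmeas, (hB'sm j hjM).isSeparable_range⟩
    have h2 : MeasurableSpace.comap (fun ω => 1 - B' k ω) inferInstance ≤
        MeasurableSpace.comap (fun ω (i : T) => B' (i : Fin M) ω) inferInstance := by
      rw [← measurable_iff_comap_le]
      have h0 : Measurable[MeasurableSpace.comap (fun ω (i : T) => B' (i : Fin M) ω)
          inferInstance] (fun ω (i : T) => B' (i : Fin M) ω) :=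
        measurable_iff_comap_le.mpr le_rfl
      have hmemT : (⟨k, hk⟩ : Fin M) ∈ T := by simp [hTdef]
      have hmeas : Measurable[MeasurableSpace.comap (fun ω (i : T) => B' (i : Fin M) ω)
          inferInstance] (B' k) :=
        (measurable_pi_apply (⟨⟨k, hk⟩, hmemT⟩ : T)).comp h0
      exact ((continuous_const.sub continuous_id).measurable).comp hmeas
    exact (IndepFun_iff_Indep _ _ ℙ).mpr (indep_mono hind h1 h2)
  -- the mean of each factor
  have hBint : ∀ k, k < M → Integrable (B' k) ℙ := fun k hk =>
    ⟨(hB'sm k hk).aestronglyMeasurable,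
      HasFiniteIntegral.of_bounded (C := 1) (hnorm.mono fun ω h => (h k hk).2)⟩
  have hYmean : ∀ k, k < M → ∫ ω, (1 - B' k ω) ∂ℙ = 1 - Cov := by
    intro k hk
    rw [integral_sub (integrable_const 1) (hBint k hk)]
    have hc : ∫ ω, B' k ω ∂ℙ = Cov := by
      rw [← integral_congr_ae (hB'eq k hk)]
      exact hBmean k hk
    rw [hc, integral_const]
    simp
  -- the key induction
  have key : ∀ k, k ≤ M →
      ∫ ω, ((List.range k).map fun j => 1 - B' j ω).prod ∂ℙ = (1 - Cov) ^ k := by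
    intro k
    induction k with
    | zero =>
      intro _
      simp only [List.range_zero, List.map_nil, List.prod_nil, pow_zero]
      rw [integral_const]
      simp
    | succ n ih =>
      intro h
      have hnM : n < M := h
      have hstep : ∀ ω : Ω, ((List.range (n + 1)).map fun j => 1 - B' j ω).prod =
          ((List.range n).map fun j => 1 - B' j ω).prod * (1 - B' n ω) := fun ω => by
        simp [List.range_succ]
      calc ∫ ω, ((List.range (n + 1)).map fun j => 1 - B' j ω).prod ∂ℙ
          = ∫ ω, ((List.range n).map fun j => 1 - B' j ω).prod * (1 - B' n ω) ∂ℙ := by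
            simp_rw [hstep]
        _ = (∫ ω, ((List.range n).map fun j => 1 - B' j ω).prod ∂ℙ) *
            ∫ ω, (1 - B' n ω) ∂ℙ :=
            aux_integral_mul _ _ (hIndep n hnM) (hPsm n hnM.le).aestronglyMeasurable
              ((stronglyMeasurable_const.sub (hB'sm n hnM)).aestronglyMeasurable)
              (hPb n hnM.le) (hnorm.mono fun ω h' => (h' n hnM).1)
        _ = (1 - Cov) ^ n * (1 - Cov) := by rw [ih hnM.le, hYmean n hnM]
        _ = (1 - Cov) ^ (n + 1) := (pow_succ _ _).symm
  -- relate primed and unprimed products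
  have hPeq : ∀ k, k ≤ M →
      (fun ω => ((List.range k).map fun j => 1 - B j ω).prod) =ᵐ[ℙ]
      (fun ω => ((List.range k).map fun j => 1 - B' j ω).prod) := by
    intro k hk
    filter_upwards [heq_all] with ω h
    congr 1
    exact List.map_congr_left fun j hj =>
      by rw [h j (lt_of_lt_of_le (List.mem_range.mp hj) hk)]
  have part1 : ∀ k : ℕ, 1 ≤ k → k ≤ M →
      ∫ ω, ((List.range k).map (fun j => 1 - B j ω)).prod ∂ℙ = (1 - Cov) ^ k := by
    intro k _ hk
    rw [integral_congr_ae (hPeq k hk)]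
    exact key k hk
  have part2 : ∫ ω, kgrOp (fun j => B j ω) M ∂ℙ =
      ∑ k ∈ Finset.range (M + 1), (1 - Cov) ^ k := by
    have he : (fun ω => kgrOp (fun j => B j ω) M) =ᵐ[ℙ]
        fun ω => 1 + ∑ k ∈ Finset.range M,
          ((List.range (k + 1)).map fun j => 1 - B' j ω).prod := by
      filter_upwards [heq_all] with ω h
      simp only [kgrOp]
      congr 1
      refine Finset.sum_congr rfl fun k hk => ?_
      congr 1
      exact List.map_congr_left fun j hj => by
        rw [h j (lt_of_le_of_lt (Nat.lt_succ_iff.mp (List.mem_range.mp hj))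
          (Finset.mem_range.mp hk))]
    rw [integral_congr_ae he]
    rw [integral_add (integrable_const 1)
      (integrable_finset_sum _ fun k hk =>
        hPint (k + 1) (Nat.succ_le_of_lt (Finset.mem_range.mp hk)))]
    rw [integral_finset_sum _ fun k hk =>
      hPint (k + 1) (Nat.succ_le_of_lt (Finset.mem_range.mp hk))]
    rw [integral_const]
    simp only [probReal_univ, one_smul]
    rw [Finset.sum_congr rfl fun k hk => key (k + 1) (Nat.succ_le_of_lt (Finset.mem_range.mp hk))]
    rw [Finset.sum_range_succ', pow_zero]
    rw [add_comm]
  refine ⟨part1, part2, ?_⟩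
  rw [part2, ← ContinuousLinearMap.mul_def]
  calc (∑ k ∈ Finset.range (M + 1), (1 - Cov) ^ k) * Cov
      = (∑ k ∈ Finset.range (M + 1), (1 - Cov) ^ k) * (1 - (1 - Cov)) := by
        rw [sub_sub_cancel]
    _ = 1 - (1 - Cov) ^ (M + 1) := geom_sum_mul_neg _ _
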